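/- (Canonicity of closed typable terms of datatype-shaped types) Let t be a closed term of the pair pattern calculus typable in system P. If t has a functional type A→σ, then t reduces to an abstraction; if t has a product type ⟨A,B⟩, then t reduces to a pair. -/

import Mathlib

/-! # The pair pattern calculus Λ_p and the type system P -/

/-- Patterns: p ::= x | ⟨p,q⟩ -/
inductive Pat : Type
  | var : ℕ → Pat
  | pair : Pat → Pat → Pat
  deriving DecidableEq

/-- Free variables of a pattern. -/
def Pat.fv : Pat → Finset ℕ
  | .var x => {x}
  | .pair p q => p.fv ∪ q.fv

/-- Linearity: every variable occurs at most once in the pattern. -/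
def Pat.Linear : Pat → Prop
  | .var _ => True
  | .pair p q => p.Linear ∧ q.Linear ∧ Disjoint p.fv q.fv

/-- Terms: t ::= x | λp.t | ⟨t,u⟩ | t u | t[p/u] | fail -/
inductive Tm : Type
  | var : ℕ → Tm
  | lam : Pat → Tm → Tm
  | pair : Tm → Tm → Tm
  | app : Tm → Tm → Tm
  | esub : Tm → Pat → Tm → Tm   -- explicit matching t[p/u]
  | fail : Tm
  deriving DecidableEq

/-- Free variables of a term. -/
def Tm.fv : Tm → Finset ℕ
  | .var x => {x}
  | .lam p t => t.fv \ p.fv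
  | .pair t u => t.fv ∪ u.fv
  | .app t u => t.fv ∪ u.fv
  | .esub t p u => (t.fv \ p.fv) ∪ u.fv
  | .fail => ∅

/-- Substitution of u for the free occurrences of x. -/
def Tm.subst (x : ℕ) (u : Tm) : Tm → Tm
  | .var y => if y = x then u else .var y
  | .lam p t => if x ∈ p.fv then .lam p t else .lam p (Tm.subst x u t)
  | .pair a b => .pair (Tm.subst x u a) (Tm.subst x u b)
  | .app a b => .app (Tm.subst x u a) (Tm.subst x u b)
  | .esub t p v => .esub (if x ∈ p.fv then t else Tm.subst x u t) p (Tm.subst x u v)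
  | .fail => .fail

/-- List contexts L ::= □ | L[p/t], represented as lists of explicit matchings
(head = outermost). -/
abbrev LCtx : Type := List (Pat × Tm)

/-- Plugging a term in a list context. -/
def LCtx.plug : LCtx → Tm → Tm
  | [], t => t
  | (p, u) :: L, t => .esub (LCtx.plug L t) p u

/-- Root reduction rules (r₁)–(r₉). -/
inductive Root : Tm → Tm → Prop
  | r1 (L : LCtx) (p t u) : Root (.app (L.plug (.lam p t)) u) (L.plug (.esub t p u))
  | r2 (t x u) : Root (.esub t (.var x) u) (Tm.subst x u t)
  | r3 (t p₁ p₂ L u₁ u₂) :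
      Root (.esub t (.pair p₁ p₂) (LCtx.plug L (.pair u₁ u₂)))
           (LCtx.plug L (.esub (.esub t p₁ u₁) p₂ u₂))
  | r4 (t p₁ p₂ L q u) : Root (.esub t (.pair p₁ p₂) (LCtx.plug L (.lam q u))) .fail
  | r5 (L : LCtx) (t u v) : Root (.app (L.plug (.pair t u)) v) .fail
  | r6 (t p₁ p₂) : Root (.esub t (.pair p₁ p₂) .fail) .fail
  | r7 (L : LCtx) : L ≠ [] → Root (L.plug .fail) .fail
  | r8 (t) : Root (.app .fail t) .fail
  | r9 (p) : Root (.lam p .fail) .fail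

/-- The reduction relation: contextual closure of the root rules. -/
inductive Step : Tm → Tm → Prop
  | root {t t'} : Root t t' → Step t t'
  | lam {t t'} (p) : Step t t' → Step (.lam p t) (.lam p t')
  | pairL {t t'} (u) : Step t t' → Step (.pair t u) (.pair t' u)
  | pairR {u u'} (t) : Step u u' → Step (.pair t u) (.pair t u')
  | appL {t t'} (u) : Step t t' → Step (.app t u) (.app t' u)
  | appR {u u'} (t) : Step u u' → Step (.app t u) (.app t u')
  | subL {t t'} (p u) : Step t t' → Step (.esub t p u) (.esub t' p u)
  | subR {u u'} (t p) : Step u u' → Step (.esub t p u) (.esub t p u')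

/-- Root rules without the substitution rule (r₂). -/
inductive RootA0 : Tm → Tm → Prop
  | r1 (L : LCtx) (p t u) : RootA0 (.app (L.plug (.lam p t)) u) (L.plug (.esub t p u))
  | r3 (t p₁ p₂ L u₁ u₂) :
      RootA0 (.esub t (.pair p₁ p₂) (LCtx.plug L (.pair u₁ u₂)))
             (LCtx.plug L (.esub (.esub t p₁ u₁) p₂ u₂))
  | r4 (t p₁ p₂ L q u) : RootA0 (.esub t (.pair p₁ p₂) (LCtx.plug L (.lam q u))) .fail
  | r5 (L : LCtx) (t u v) : RootA0 (.app (L.plug (.pair t u)) v) .fail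
  | r6 (t p₁ p₂) : RootA0 (.esub t (.pair p₁ p₂) .fail) .fail
  | r7 (L : LCtx) : L ≠ [] → RootA0 (L.plug .fail) .fail
  | r8 (t) : RootA0 (.app .fail t) .fail
  | r9 (p) : RootA0 (.lam p .fail) .fail

/-- Reduction without rule (r₂). -/
inductive StepA0 : Tm → Tm → Prop
  | root {t t'} : RootA0 t t' → StepA0 t t'
  | lam {t t'} (p) : StepA0 t t' → StepA0 (.lam p t) (.lam p t')
  | pairL {t t'} (u) : StepA0 t t' → StepA0 (.pair t u) (.pair t' u)
  | pairR {u u'} (t) : StepA0 u u' → StepA0 (.pair t u) (.pair t u')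
  | appL {t t'} (u) : StepA0 t t' → StepA0 (.app t u) (.app t' u)
  | appR {u u'} (t) : StepA0 u u' → StepA0 (.app t u) (.app t u')
  | subL {t t'} (p u) : StepA0 t t' → StepA0 (.esub t p u) (.esub t' p u)
  | subR {u u'} (t p) : StepA0 u u' → StepA0 (.esub t p u) (.esub t p u')

/-- Many-step reduction. -/
abbrev Steps : Tm → Tm → Prop := Relation.ReflTransGen Step

/-! ## Types and the type system P -/

/-- Types σ ::= α | ⟨A,B⟩ | A → σ, where multiset types A are represented
as lists of types. -/
inductive Ty : Type
  | base : ℕ → Ty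
  | prod : List Ty → List Ty → Ty
  | arr : List Ty → Ty → Ty

/-- Typing environments: functions from variables to multiset types. -/
def Env : Type := ℕ → List Ty

/-- Sum of environments (pointwise multiset union). -/
def Env.add (Γ Δ : Env) : Env := fun x => Γ x ++ Δ x

/-- Empty environment. -/
def Env.empty : Env := fun _ => []

/-- The environment x : A. -/
def Env.single (x : ℕ) (A : List Ty) : Env := fun y => if y = x then A else []

/-- Γ|_p : restriction of Γ to the free variables of p. -/
def Env.restrict (Γ : Env) (p : Pat) : Env := fun x => if x ∈ p.fv then Γ x else []

/-- Γ \ Γ|_p. -/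
def Env.erase (Γ : Env) (p : Pat) : Env := fun x => if x ∈ p.fv then [] else Γ x

/-- Pattern typing Γ ⊩ p : A. -/
inductive PatTy : Env → Pat → List Ty → Prop
  | var (x : ℕ) (A : List Ty) : PatTy (Env.single x A) (.var x) A
  | pair {Γ Δ p q A B} : PatTy Γ p A → PatTy Δ q B → Disjoint p.fv q.fv →
      PatTy (Γ.add Δ) (.pair p q) [Ty.prod A B]

mutual
  /-- Typing derivations Γ ⊢ t : σ of system P (rules ax, abs, app, pair, sub). -/
  inductive TDeriv : Env → Tm → Ty → Type
    | ax (x : ℕ) (σ : Ty) : TDeriv (Env.single x [σ]) (.var x) σ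
    | abs {Γ t σ p A} : TDeriv Γ t σ → PatTy (Γ.restrict p) p A →
        TDeriv (Γ.erase p) (.lam p t) (.arr A σ)
    | app {Γ Δ t u A σ} : TDeriv Γ t (.arr A σ) → MDeriv Δ u A →
        TDeriv (Γ.add Δ) (.app t u) σ
    | pair {Γ Δ t u A B} : MDeriv Γ t A → MDeriv Δ u B →
        TDeriv (Γ.add Δ) (.pair t u) (.prod A B)
    | esub {Γ Δ t σ p A u} : TDeriv Γ t σ → PatTy (Γ.restrict p) p A → MDeriv Δ u A →
        TDeriv ((Γ.erase p).add Δ) (.esub t p u) σ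
  /-- Multiset typing derivations Γ ⊢ t : A (the rule (many)). -/
  inductive MDeriv : Env → Tm → List Ty → Type
    | nil (t : Tm) : MDeriv Env.empty t []
    | cons {Γ Δ t σ A} : TDeriv Γ t σ → MDeriv Δ t A → MDeriv (Γ.add Δ) t (σ :: A)
end

mutual
  /-- The measure of a derivation: number of typing rules except (many). -/
  def measT : ∀ {Γ t σ}, TDeriv Γ t σ → ℕ
    | _, _, _, .ax _ _ => 1
    | _, _, _, .abs d _ => measT d + 1
    | _, _, _, .app d m => measT d + measM m + 1
    | _, _, _, .pair m n => measM m + measM n + 1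
    | _, _, _, .esub d _ m => measT d + measM m + 1
  def measM : ∀ {Γ t A}, MDeriv Γ t A → ℕ
    | _, _, _, .nil _ => 0
    | _, _, _, .cons d m => measT d + measM m
end

/-- Term contexts with a single hole. -/
inductive TmCtx : Type
  | hole : TmCtx
  | lam : Pat → TmCtx → TmCtx
  | pairL : TmCtx → Tm → TmCtx
  | pairR : Tm → TmCtx → TmCtx
  | appL : TmCtx → Tm → TmCtx
  | appR : Tm → TmCtx → TmCtx
  | subL : TmCtx → Pat → Tm → TmCtx
  | subR : Tm → Pat → TmCtx → TmCtx

/-- Plugging a term in a term context. -/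
def TmCtx.plug : TmCtx → Tm → Tm
  | .hole, t => t
  | .lam p C, t => .lam p (C.plug t)
  | .pairL C u, t => .pair (C.plug t) u
  | .pairR u C, t => .pair u (C.plug t)
  | .appL C u, t => .app (C.plug t) u
  | .appR u C, t => .app u (C.plug t)
  | .subL C p u, t => .esub (C.plug t) p u
  | .subR u p C, t => .esub u p (C.plug t)

mutual
  /-- Typed occurrences of a derivation. -/
  def tocT : ∀ {Γ t σ}, TDeriv Γ t σ → Set TmCtx
    | _, _, _, .ax _ _ => {TmCtx.hole}
    | _, _, _, @TDeriv.abs _ _ _ p _ d _ =>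
        {TmCtx.hole} ∪ (TmCtx.lam p) '' tocT d
    | _, _, _, @TDeriv.app _ _ t u _ _ d m =>
        {TmCtx.hole} ∪ (fun C => TmCtx.appL C u) '' tocT d ∪ (fun C => TmCtx.appR t C) '' tocM m
    | _, _, _, @TDeriv.pair _ _ t u _ _ m n =>
        {TmCtx.hole} ∪ (fun C => TmCtx.pairL C u) '' tocM m ∪ (fun C => TmCtx.pairR t C) '' tocM n
    | _, _, _, @TDeriv.esub _ _ t _ p _ u d _ m =>
        {TmCtx.hole} ∪ (fun C => TmCtx.subL C p u) '' tocT d ∪ (fun C => TmCtx.subR t p C) '' tocM m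
  def tocM : ∀ {Γ t A}, MDeriv Γ t A → Set TmCtx
    | _, _, _, .nil _ => ∅
    | _, _, _, .cons d m => tocT d ∪ tocM m
end

/-- Head contexts H ::= □ | λp.H | H t | H[p/t]. -/
inductive HCtx : Type
  | hole : HCtx
  | lam : Pat → HCtx → HCtx
  | app : HCtx → Tm → HCtx
  | esub : HCtx → Pat → Tm → HCtx

/-- Plugging a term in a head context. -/
def HCtx.plug : HCtx → Tm → Tm
  | .hole, t => t
  | .lam p H, t => .lam p (H.plug t)
  | .app H u, t => .app (H.plug t) u
  | .esub H p u, t => .esub (H.plug t) p u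

mutual
  /-- K-canonical forms: K ::= x | K t | K[⟨p,q⟩/K]. -/
  inductive IsK : Tm → Prop
    | var (x : ℕ) : IsK (.var x)
    | app {t} (u) : IsK t → IsK (.app t u)
    | esub {t u} (p q) : IsK t → IsK u → IsK (.esub t (.pair p q) u)
  /-- Canonical forms: J ::= λp.J | ⟨t,t⟩ | K | J[⟨p,q⟩/K]. -/
  inductive IsJ : Tm → Prop
    | lam {t} (p) : IsJ t → IsJ (.lam p t)
    | pair (t u : Tm) : IsJ (.pair t u)
    | ofK {t} : IsK t → IsJ t
    | esub {t u} (p q) : IsJ t → IsK u → IsJ (.esub t (.pair p q) u)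
end

/-- Pure K-canonical forms: K′ ::= x | K′ t. -/
inductive IsK' : Tm → Prop
  | var (x : ℕ) : IsK' (.var x)
  | app {t} (u) : IsK' t → IsK' (.app t u)

/-- Pure canonical forms: J′ ::= λp.J′ | ⟨t,t⟩ | K′ | J′[⟨p,q⟩/K′]. -/
inductive IsJ' : Tm → Prop
  | lam {t} (p) : IsJ' t → IsJ' (.lam p t)
  | pair (t u : Tm) : IsJ' (.pair t u)
  | ofK {t} : IsK' t → IsJ' t
  | esub {t u} (p q) : IsJ' t → IsK' u → IsJ' (.esub t (.pair p q) u)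

/-- A multiset type is inhabited if some closed term has it. -/
def MInhab (A : List Ty) : Prop := ∃ u : Tm, u.fv = ∅ ∧ Nonempty (MDeriv Env.empty u A)

/-- An environment is inhabited if all the multiset types it assigns are inhabited. -/
def EnvInhab (Γ : Env) : Prop := ∀ x, Γ x ≠ [] → MInhab (Γ x)

/-- C₁ → ⋯ → Cₙ → σ. -/
def mkArr : List (List Ty) → Ty → Ty
  | [], σ => σ
  | A :: Cs, σ => .arr A (mkArr Cs σ)

/-- A term is solvable if some head context closes it and sends it to a pair. -/
def Solvable (t : Tm) : Prop :=
  ∃ H : HCtx, (H.plug t).fv = ∅ ∧ ∃ u v : Tm, Steps (H.plug t) (.pair u v)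

/-! ## Auxiliary development -/

section Aux

/-- Size of a pattern. -/
def psize : Pat → ℕ
  | .var _ => 1
  | .pair p q => psize p + psize q + 1

/-- Size of a term (counting pattern nodes too). -/
def tsize : Tm → ℕ
  | .var _ => 1
  | .fail => 1
  | .lam p t => psize p + tsize t + 1
  | .pair t u => tsize t + tsize u + 1
  | .app t u => tsize t + tsize u + 1
  | .esub t p u => tsize t + psize p + tsize u + 1

mutual
  /-- Total number of rules in a derivation (including (many)). -/
  def cntT : ∀ {Γ t σ}, TDeriv Γ t σ → ℕ
    | _, _, _, .ax _ _ => 1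
    | _, _, _, .abs d _ => cntT d + 1
    | _, _, _, .app d m => cntT d + cntM m + 1
    | _, _, _, .pair m n => cntM m + cntM n + 1
    | _, _, _, .esub d _ m => cntT d + cntM m + 1
  def cntM : ∀ {Γ t A}, MDeriv Γ t A → ℕ
    | _, _, _, .nil _ => 1
    | _, _, _, .cons d m => cntT d + cntM m + 1
end

/-- Cast a derivation along an environment equality. -/
def castT {Γ Γ' : Env} {t σ} (h : Γ = Γ') (d : TDeriv Γ t σ) : TDeriv Γ' t σ := h ▸ d

def castM {Γ Γ' : Env} {t A} (h : Γ = Γ') (m : MDeriv Γ t A) : MDeriv Γ' t A := h ▸ m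

@[simp] theorem measT_castT {Γ Γ' : Env} {t σ} (h : Γ = Γ') (d : TDeriv Γ t σ) :
    measT (castT h d) = measT d := by subst h; rfl

@[simp] theorem measM_castM {Γ Γ' : Env} {t A} (h : Γ = Γ') (m : MDeriv Γ t A) :
    measM (castM h m) = measM m := by subst h; rfl

theorem Env.add_empty (Γ : Env) : Γ.add Env.empty = Γ :=
  funext fun _ => List.append_nil _

theorem Env.empty_add (Γ : Env) : Env.empty.add Γ = Γ := rfl

theorem eq_empty_of_add {Γ Δ : Env} (h : Env.empty = Γ.add Δ) :
    Γ = Env.empty ∧ Δ = Env.empty := by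
  constructor <;> funext x <;>
    · have := congrFun h x
      simp only [Env.add, Env.empty] at this
      rcases List.append_eq_nil_iff.mp this.symm with ⟨h1, h2⟩
      first | exact h1 | exact h2

/-- Support of pattern typing. -/
theorem patSupport {Γ : Env} {p A} (h : PatTy Γ p A) : ∀ x, x ∉ p.fv → Γ x = [] := by
  induction h with
  | var y B => intro x hx; simp [Pat.fv] at hx; simp [Env.single, hx]
  | pair h1 h2 hd ih1 ih2 =>
      intro x hx
      simp [Pat.fv] at hx
      simp [Env.add, ih1 x hx.1, ih2 x hx.2]

/-- Support of term typing (mutual, via strong induction on `cntT`). -/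
theorem supportAux : ∀ N : ℕ,
    (∀ {Γ : Env} {t σ} (d : TDeriv Γ t σ), cntT d ≤ N → ∀ x, x ∉ t.fv → Γ x = []) ∧
    (∀ {Γ : Env} {t A} (m : MDeriv Γ t A), cntM m ≤ N → ∀ x, x ∉ t.fv → Γ x = []) := by
  intro N
  induction N using Nat.strong_induction_on with
  | _ N ih =>
    constructor
    · intro Γ t σ d hN x hx
      cases d with
      | ax y =>
          simp [Tm.fv] at hx; simp [Env.single, hx]
      | abs d hp =>
          simp [Tm.fv] at hx
          simp only [Env.erase]
          split
          · rfl
          · rename_i hxp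
            exact (ih (cntT d) (by simp [cntT] at hN ⊢; omega)).1 d le_rfl x
              (fun hmem => hxp (hx hmem))
      | app d m =>
          simp [Tm.fv] at hx
          have h1 := (ih (cntT d) (by simp [cntT] at hN ⊢; omega)).1 d le_rfl x hx.1
          have h2 := (ih (cntM m) (by simp [cntT] at hN ⊢; omega)).2 m le_rfl x hx.2
          simp [Env.add, h1, h2]
      | pair m n =>
          simp [Tm.fv] at hx
          have h1 := (ih (cntM m) (by simp [cntT] at hN ⊢; omega)).2 m le_rfl x hx.1
          have h2 := (ih (cntM n) (by simp [cntT] at hN ⊢; omega)).2 n le_rfl x hx.2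
          simp [Env.add, h1, h2]
      | esub d hp m =>
          simp [Tm.fv] at hx
          have h2 := (ih (cntM m) (by simp [cntT] at hN ⊢; omega)).2 m le_rfl x hx.2
          simp only [Env.add, h2, List.append_nil, Env.erase]
          split
          · rfl
          · rename_i hxp
            exact (ih (cntT d) (by simp [cntT] at hN ⊢; omega)).1 d le_rfl x
              (fun hmem => hxp (hx.1 hmem))
    · intro Γ t A m hN x hx
      cases m with
      | nil => rfl
      | cons d m =>
          have h1 := (ih (cntT d) (by simp [cntM] at hN ⊢; omega)).1 d le_rfl x hx
          have h2 := (ih (cntM m) (by simp [cntM] at hN ⊢; omega)).2 m le_rfl x hx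
          simp [Env.add, h1, h2]

theorem supportT {Γ : Env} {t σ} (d : TDeriv Γ t σ) : ∀ x, x ∉ t.fv → Γ x = [] :=
  (supportAux (cntT d)).1 d le_rfl

theorem supportM {Γ : Env} {t A} (m : MDeriv Γ t A) : ∀ x, x ∉ t.fv → Γ x = [] :=
  (supportAux (cntM m)).2 m le_rfl

theorem env_empty_of_closed_T {Γ : Env} {t σ} (hc : t.fv = ∅) (d : TDeriv Γ t σ) :
    Γ = Env.empty :=
  funext fun x => supportT d x (by simp [hc])

theorem env_empty_of_closed_M {Γ : Env} {t A} (hc : t.fv = ∅) (m : MDeriv Γ t A) :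
    Γ = Env.empty :=
  funext fun x => supportM m x (by simp [hc])

/-- Inversion of the empty multiset derivation. -/
theorem mderiv_nil {Δ : Env} {u} (m : MDeriv Δ u []) :
    Δ = Env.empty ∧ measM m = 0 := by
  cases m; exact ⟨rfl, rfl⟩

/-- Splitting a multiset derivation with empty environment. -/
theorem splitM : ∀ (A : List Ty) {B : List Ty} {u : Tm} {Δ : Env}
    (m : MDeriv Δ u (A ++ B)), Δ = Env.empty →
    ∃ (m₁ : MDeriv Env.empty u A) (m₂ : MDeriv Env.empty u B),
      measM m₁ + measM m₂ ≤ measM m := by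
  intro A
  induction A with
  | nil => intro B u Δ m hΔ; subst hΔ; exact ⟨.nil u, m, by simp [measM]⟩
  | cons σ A ih =>
      intro B u Δ m hΔ
      cases m with
      | cons d m' =>
          have he := eq_empty_of_add hΔ.symm
          obtain ⟨m₁, m₂, hm⟩ := ih m' he.2
          refine ⟨.cons (castT he.1 d) m₁, m₂, ?_⟩
          simp only [measM, measT_castT]
          rw [Nat.add_assoc]; exact Nat.add_le_add_left hm _

end Aux

section Subst

theorem E_empty_erase (p : Pat) : Env.empty.erase p = Env.empty := by
  funext y; simp [Env.erase, Env.empty]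

theorem E_single_ne {y x : ℕ} (A : List Ty) (h : y ≠ x) :
    (Env.single y A).erase (.var x) = Env.single y A := by
  funext z; simp only [Env.erase, Env.single, Pat.fv, Finset.mem_singleton]
  by_cases hz : z = x
  · subst hz; simp [Ne.symm h]
  · simp [hz]

theorem E_single_eq (x : ℕ) (A : List Ty) :
    (Env.single x A).erase (.var x) = Env.empty := by
  funext z; simp only [Env.erase, Env.single, Pat.fv, Finset.mem_singleton, Env.empty]
  by_cases hz : z = x
  · simp [hz]
  · simp [hz]

theorem E_erase_comm (Γ : Env) (p q : Pat) :
    (Γ.erase p).erase q = (Γ.erase q).erase p := by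
  funext z; simp only [Env.erase]; split <;> split <;> simp

theorem E_erase_var_of_mem {p : Pat} {x : ℕ} (Γ : Env) (h : x ∈ p.fv) :
    (Γ.erase p).erase (.var x) = Γ.erase p := by
  funext z; simp only [Env.erase, Pat.fv, Finset.mem_singleton]
  split
  · rename_i hz; subst hz; simp [h]
  · rfl

theorem E_restrict_erase_var {p : Pat} {x : ℕ} (Γ : Env) (h : x ∉ p.fv) :
    (Γ.erase (.var x)).restrict p = Γ.restrict p := by
  funext z; simp only [Env.restrict, Env.erase, Pat.fv, Finset.mem_singleton]
  split
  · rename_i hz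
    have : ¬ z = x := fun he => h (he ▸ hz)
    simp [this]
  · rfl

theorem E_add_erase (Γ Δ : Env) (p : Pat) :
    (Γ.add Δ).erase p = (Γ.erase p).add (Δ.erase p) := by
  funext z; simp only [Env.erase, Env.add]; split <;> simp

theorem E_erase_apply_not_mem {p : Pat} {x : ℕ} (Γ : Env) (h : x ∉ p.fv) :
    (Γ.erase p) x = Γ x := by simp [Env.erase, h]

theorem E_erase_apply_mem {p : Pat} {x : ℕ} (Γ : Env) (h : x ∈ p.fv) :
    (Γ.erase p) x = [] := by simp [Env.erase, h]

theorem mderiv_single {Δ : Env} {u σ} (m : MDeriv Δ u [σ]) (hΔ : Δ = Env.empty) :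
    ∃ d : TDeriv Env.empty u σ, measT d ≤ measM m := by
  cases m with
  | cons d m' =>
      have he := eq_empty_of_add hΔ.symm
      obtain ⟨hΔ', hm'⟩ := mderiv_nil m'
      exact ⟨castT he.1 d, by simp [measM, hm']⟩

def castA {Δ : Env} {u : Tm} {A A' : List Ty} (h : A = A') (m : MDeriv Δ u A) :
    MDeriv Δ u A' := h ▸ m

@[simp] theorem measM_castA {Δ : Env} {u : Tm} {A A' : List Ty} (h : A = A')
    (m : MDeriv Δ u A) : measM (castA h m) = measM m := by subst h; rfl

/-- The substitution lemma, by strong induction on `cntT`/`cntM`. -/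
theorem substAux : ∀ N : ℕ,
    (∀ {Γ : Env} {t σ} (d : TDeriv Γ t σ), cntT d ≤ N →
       ∀ {x : ℕ} {u : Tm} (m : MDeriv Env.empty u (Γ x)),
       ∃ d' : TDeriv (Γ.erase (.var x)) (Tm.subst x u t) σ, measT d' ≤ measT d + measM m) ∧
    (∀ {Γ : Env} {t A} (m₀ : MDeriv Γ t A), cntM m₀ ≤ N →
       ∀ {x : ℕ} {u : Tm} (m : MDeriv Env.empty u (Γ x)),
       ∃ m' : MDeriv (Γ.erase (.var x)) (Tm.subst x u t) A, measM m' ≤ measM m₀ + measM m) := by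
  intro N
  induction N using Nat.strong_induction_on with
  | _ N ih =>
    constructor
    · intro Γ t σ d hN x u m
      cases d with
      | ax y =>
          by_cases hyx : y = x
          · subst hyx
            obtain ⟨du, hdu⟩ := mderiv_single
              (castA (show Env.single y [σ] y = [σ] by simp [Env.single]) m) rfl
            simp only [measM_castA] at hdu
            simp only [Tm.subst]; rw [if_pos (rfl : y = y)]
            refine ⟨castT (E_single_eq y [σ]).symm du, ?_⟩
            simp only [measT_castT, measT]
            omega
          · have hm : Env.single y [σ] x = [] := by
              simp only [Env.single, ite_eq_right_iff]
              intro h; exact absurd h.symm hyx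
            simp only [Tm.subst]; rw [if_neg hyx]
            refine ⟨castT (E_single_ne [σ] hyx).symm (TDeriv.ax y σ), ?_⟩
            simp [measT_castT, measT]
      | abs d hp =>
          rename_i Γ₀ t₀ σ₀ p A
          by_cases hxp : x ∈ p.fv
          · simp only [Tm.subst]; rw [if_pos hxp]
            refine ⟨castT (E_erase_var_of_mem Γ₀ hxp).symm (TDeriv.abs d hp), ?_⟩
            simp [measT_castT, measT]
          · obtain ⟨d', hd'⟩ := (ih (cntT d) (by simp [cntT] at hN ⊢; omega)).1 d le_rfl
              (castA (E_erase_apply_not_mem (p := p) Γ₀ hxp) m)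
            simp only [measM_castA] at hd'
            have hp' : PatTy ((Γ₀.erase (.var x)).restrict p) p A := by
              rw [E_restrict_erase_var Γ₀ hxp]; exact hp
            simp only [Tm.subst]; rw [if_neg hxp]
            refine ⟨castT (E_erase_comm Γ₀ (.var x) p) (TDeriv.abs d' hp'), ?_⟩
            simp only [measT_castT, measT]
            omega
      | app d dm =>
          rename_i Γ₁ Γ₂ t₁ t₂ A
          obtain ⟨mA, mB, hsplit⟩ := splitM (Γ₁ x) (B := Γ₂ x) m rfl
          obtain ⟨d', hd'⟩ := (ih (cntT d) (by simp [cntT] at hN ⊢; omega)).1 d le_rfl mA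
          obtain ⟨dm', hdm'⟩ := (ih (cntM dm) (by simp [cntT] at hN ⊢; omega)).2 dm le_rfl mB
          refine ⟨castT (E_add_erase Γ₁ Γ₂ (.var x)).symm (TDeriv.app d' dm'), ?_⟩
          refine (measT_castT _ (TDeriv.app d' dm')).trans_le ?_
          simp only [measT_castT, measT]
          have e : measM m = measM (A := Γ₁ x ++ Γ₂ x) m := rfl
          omega
      | pair dm dn =>
          rename_i Γ₁ Γ₂ t₁ t₂ A B
          obtain ⟨mA, mB, hsplit⟩ := splitM (Γ₁ x) (B := Γ₂ x) m rfl
          obtain ⟨dm', hdm'⟩ := (ih (cntM dm) (by simp [cntT] at hN ⊢; omega)).2 dm le_rfl mA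
          obtain ⟨dn', hdn'⟩ := (ih (cntM dn) (by simp [cntT] at hN ⊢; omega)).2 dn le_rfl mB
          refine ⟨castT (E_add_erase Γ₁ Γ₂ (.var x)).symm (TDeriv.pair dm' dn'), ?_⟩
          refine (measT_castT _ (TDeriv.pair dm' dn')).trans_le ?_
          simp only [measT_castT, measT]
          have e : measM m = measM (A := Γ₁ x ++ Γ₂ x) m := rfl
          omega
      | esub d hp dm =>
          rename_i Γ₁ Γ₂ t₁ p A t₂
          obtain ⟨mA, mB, hsplit⟩ := splitM ((Γ₁.erase p) x) (B := Γ₂ x) m rfl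
          obtain ⟨dm', hdm'⟩ := (ih (cntM dm) (by simp [cntT] at hN ⊢; omega)).2 dm le_rfl mB
          by_cases hxp : x ∈ p.fv
          · simp only [Tm.subst]; rw [if_pos hxp]
            refine ⟨castT (show (Γ₁.erase p).add (Γ₂.erase (Pat.var x))
                  = ((Γ₁.erase p).add Γ₂).erase (Pat.var x) by
                rw [E_add_erase, E_erase_var_of_mem Γ₁ hxp])
              (TDeriv.esub d hp dm'), ?_⟩
            simp only [measT_castT, measT]
            have e : measM m = measM (A := (Γ₁.erase p) x ++ Γ₂ x) m := rfl
            omega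
          · obtain ⟨d', hd'⟩ := (ih (cntT d) (by simp [cntT] at hN ⊢; omega)).1 d le_rfl
              (castA (E_erase_apply_not_mem (p := p) Γ₁ hxp) mA)
            simp only [measM_castA] at hd'
            have hp' : PatTy ((Γ₁.erase (.var x)).restrict p) p A := by
              rw [E_restrict_erase_var Γ₁ hxp]; exact hp
            simp only [Tm.subst]; rw [if_neg hxp]
            refine ⟨castT (show ((Γ₁.erase (Pat.var x)).erase p).add (Γ₂.erase (Pat.var x))
                  = ((Γ₁.erase p).add Γ₂).erase (Pat.var x) by
                rw [E_add_erase, E_erase_comm Γ₁ (Pat.var x) p])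
              (TDeriv.esub d' hp' dm'), ?_⟩
            simp only [measT_castT, measT]
            have e : measM m = measM (A := (Γ₁.erase p) x ++ Γ₂ x) m := rfl
            omega
    · intro Γ t A m₀ hN x u m
      cases m₀ with
      | nil =>
          exact ⟨castM (E_empty_erase _).symm (.nil _), by simp [measM_castM, measM]⟩
      | cons d dm =>
          rename_i Γ₁ Γ₂ σ' A'
          obtain ⟨mA, mB, hsplit⟩ := splitM (Γ₁ x) (B := Γ₂ x) m rfl
          obtain ⟨d', hd'⟩ := (ih (cntT d) (by simp [cntM] at hN ⊢; omega)).1 d le_rfl mA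
          obtain ⟨dm', hdm'⟩ := (ih (cntM dm) (by simp [cntM] at hN ⊢; omega)).2 dm le_rfl mB
          refine ⟨castM (E_add_erase Γ₁ Γ₂ (.var x)).symm (.cons d' dm'), ?_⟩
          simp only [measM_castM, measM]
          have e : measM m = measM (A := Γ₁ x ++ Γ₂ x) m := rfl
          omega

theorem substT {Γ : Env} {t σ} (d : TDeriv Γ t σ) {x : ℕ} {u : Tm}
    (m : MDeriv Env.empty u (Γ x)) :
    ∃ d' : TDeriv (Γ.erase (.var x)) (Tm.subst x u t) σ,
      measT d' ≤ measT d + measM m :=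
  (substAux (cntT d)).1 d le_rfl m

end Subst

section Reach

theorem fv_subst (x : ℕ) (u : Tm) : ∀ t : Tm, ∀ y ∈ (Tm.subst x u t).fv,
    (y ∈ t.fv ∧ y ≠ x) ∨ y ∈ u.fv := by
  intro t
  induction t with
  | var z =>
      intro y hy
      simp only [Tm.subst] at hy
      split at hy
      · exact Or.inr hy
      · rename_i hne
        simp [Tm.fv] at hy ⊢
        subst hy; exact Or.inl ⟨rfl, hne⟩
  | lam p t ih =>
      intro y hy
      simp only [Tm.subst] at hy
      split at hy
      · rename_i hxp
        simp [Tm.fv] at hy ⊢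
        refine Or.inl ⟨⟨hy.1, hy.2⟩, ?_⟩
        rintro rfl; exact hy.2 hxp
      · rename_i hxp
        simp [Tm.fv] at hy ⊢
        rcases ih y hy.1 with ⟨h1, h2⟩ | h
        · exact Or.inl ⟨⟨h1, hy.2⟩, h2⟩
        · exact Or.inr h
  | pair a b iha ihb =>
      intro y hy
      simp only [Tm.subst, Tm.fv, Finset.mem_union] at hy ⊢
      rcases hy with h | h
      · rcases iha y h with ⟨h1, h2⟩ | h3
        · exact Or.inl ⟨Or.inl h1, h2⟩
        · exact Or.inr h3
      · rcases ihb y h with ⟨h1, h2⟩ | h3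
        · exact Or.inl ⟨Or.inr h1, h2⟩
        · exact Or.inr h3
  | app a b iha ihb =>
      intro y hy
      simp only [Tm.subst, Tm.fv, Finset.mem_union] at hy ⊢
      rcases hy with h | h
      · rcases iha y h with ⟨h1, h2⟩ | h3
        · exact Or.inl ⟨Or.inl h1, h2⟩
        · exact Or.inr h3
      · rcases ihb y h with ⟨h1, h2⟩ | h3
        · exact Or.inl ⟨Or.inr h1, h2⟩
        · exact Or.inr h3
  | esub a p b iha ihb =>
      intro y hy
      simp only [Tm.subst, Tm.fv, Finset.mem_union, Finset.mem_sdiff] at hy ⊢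
      rcases hy with h | h
      · split at h
        · rename_i hxp
          refine Or.inl ⟨Or.inl h, ?_⟩
          rintro rfl; exact h.2 hxp
        · rename_i hxp
          rcases iha y h.1 with ⟨h1, h2⟩ | h3
          · exact Or.inl ⟨Or.inl ⟨h1, h.2⟩, h2⟩
          · exact Or.inr h3
      · rcases ihb y h with ⟨h1, h2⟩ | h3
        · exact Or.inl ⟨Or.inr h1, h2⟩
        · exact Or.inr h3
  | fail => intro y hy; simp [Tm.subst, Tm.fv] at hy

theorem fv_subst_closed {x : ℕ} {u t : Tm} (ht : t.fv ⊆ {x}) (hu : u.fv = ∅) :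
    (Tm.subst x u t).fv = ∅ := by
  rw [Finset.eq_empty_iff_forall_notMem]
  intro y hy
  rcases fv_subst x u t y hy with ⟨h1, h2⟩ | h
  · exact h2 (Finset.mem_singleton.mp (ht h1))
  · simp [hu] at h

/-- Splitting a pattern typing of a pair pattern. -/
theorem patSplit {Γ : Env} {p₁ p₂ : Pat} {A : List Ty}
    (h : PatTy (Γ.restrict (.pair p₁ p₂)) (.pair p₁ p₂) A) :
    ∃ A₁ A₂, A = [Ty.prod A₁ A₂] ∧ PatTy (Γ.restrict p₁) p₁ A₁ ∧
      PatTy (Γ.restrict p₂) p₂ A₂ ∧ Disjoint p₁.fv p₂.fv := by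
  generalize hΔ : Γ.restrict (.pair p₁ p₂) = Δ at h
  cases h with
  | pair h1 h2 hd =>
      rename_i Γa Γb A₁ A₂
      refine ⟨A₁, A₂, rfl, ?_, ?_, hd⟩
      · have : Γa = Γ.restrict p₁ := by
          funext z
          by_cases hz : z ∈ p₁.fv
          · have hzb : Γb z = [] := patSupport h2 z (Finset.disjoint_left.mp hd hz)
            have := congrFun hΔ z
            simp only [Env.add, hzb, List.append_nil] at this
            rw [← this]
            simp [Env.restrict, Pat.fv, hz]
          · rw [patSupport h1 z hz]
            simp [Env.restrict, hz]
        rwa [this] at h1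
      · have : Γb = Γ.restrict p₂ := by
          funext z
          by_cases hz : z ∈ p₂.fv
          · have hza : Γa z = [] := patSupport h1 z (Finset.disjoint_right.mp hd hz)
            have := congrFun hΔ z
            simp only [Env.add, hza, List.nil_append] at this
            rw [← this]
            simp [Env.restrict, Pat.fv, hz]
          · rw [patSupport h2 z hz]
            simp [Env.restrict, hz]
        rwa [this] at h2

theorem E_restrict_erase {Γ : Env} {p q : Pat} (hd : Disjoint p.fv q.fv) :
    (Γ.erase p).restrict q = Γ.restrict q := by
  funext z
  simp only [Env.restrict, Env.erase]
  by_cases hz : z ∈ q.fv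
  · have : z ∉ p.fv := Finset.disjoint_right.mp hd hz
    simp [hz, this]
  · simp [hz]

theorem steps_appL {t t' u : Tm} (h : Steps t t') : Steps (.app t u) (.app t' u) :=
  Relation.ReflTransGen.lift (fun s => Tm.app s u) (fun _ _ hs => Step.appL u hs) _ _ h

theorem steps_subR {t t' : Tm} (p : Pat) (u : Tm) (h : Steps t t') :
    Steps (.esub u p t) (.esub u p t') :=
  Relation.ReflTransGen.lift (fun s => Tm.esub u p s) (fun _ _ hs => Step.subR u p hs) _ _ h

end Reach

section Main

theorem patVar {Δ : Env} {x : ℕ} {A : List Ty} (h : PatTy Δ (.var x) A) :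
    Δ = Env.single x A := by cases h; rfl

theorem reach : ∀ (n k : ℕ) {Γ : Env} {t : Tm} {σ : Ty} (d : TDeriv Γ t σ),
    measT d ≤ n → tsize t ≤ k → t.fv = ∅ →
    ∃ t' : Tm, Steps t t' ∧ t'.fv = ∅ ∧
      ((∃ p u, t' = .lam p u) ∨ (∃ u v, t' = .pair u v)) ∧
      ∃ (Γ' : Env) (d' : TDeriv Γ' t' σ),
        measT d' ≤ measT d ∧ (t' = t ∨ measT d' < measT d) := by
  intro n
  induction n using Nat.strong_induction_on with
  | _ n ihn =>
  intro k
  induction k using Nat.strong_induction_on with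
  | _ k ihk =>
  intro Γ t σ d hn hk hc
  cases t with
  | var y => simp [Tm.fv] at hc
  | fail => cases d
  | lam p body => exact ⟨_, .refl, hc, Or.inl ⟨p, body, rfl⟩, Γ, d, le_rfl, Or.inl rfl⟩
  | pair a b => exact ⟨_, .refl, hc, Or.inr ⟨a, b, rfl⟩, Γ, d, le_rfl, Or.inl rfl⟩
  | app f a =>
    cases d with
    | app df ma =>
      rename_i Γ₁ Γ₂ A
      obtain ⟨hcf, hca⟩ : f.fv = ∅ ∧ a.fv = ∅ :=
        Finset.union_eq_empty.mp (by simpa [Tm.fv] using hc)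
      have hlt : measT df < measT (TDeriv.app df ma) := by simp [measT]
      obtain ⟨w, hsw, hcw, hshape, Γ', dw, hmw, -⟩ :=
        ihn (measT df) (lt_of_lt_of_le hlt hn) (tsize f) df le_rfl le_rfl hcf
      rcases hshape with ⟨p, body, rfl⟩ | ⟨w₁, w₂, rfl⟩
      · cases dw with
        | abs d₀ hp =>
          have hstep : Step (.app (Tm.lam p body) a) (.esub body p a) :=
            Step.root (Root.r1 [] p body a)
          have hcnew : (Tm.esub body p a).fv = ∅ := by
            simp only [Tm.fv] at hcw ⊢
            rw [hcw, hca]; simp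
          simp only [measT] at hmw
          have hm2 : measT (TDeriv.esub d₀ hp ma) < measT (TDeriv.app df ma) := by
            simp only [measT]; omega
          obtain ⟨t', hs', hc', hshape', Γ'', d'', hm'', -⟩ :=
            ihn (measT (TDeriv.esub d₀ hp ma)) (lt_of_lt_of_le hm2 hn)
              (tsize (Tm.esub body p a)) (TDeriv.esub d₀ hp ma) le_rfl le_rfl hcnew
          exact ⟨t', ((steps_appL hsw).tail hstep).trans hs', hc', hshape', Γ'', d'',
            le_of_lt (lt_of_le_of_lt hm'' hm2), Or.inr (lt_of_le_of_lt hm'' hm2)⟩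
      · cases dw
  | esub body p a =>
    cases d with
    | esub d₀ hp ma =>
      rename_i Γ₁ Γ₂ A
      obtain ⟨hcb, hca⟩ : body.fv \ p.fv = ∅ ∧ a.fv = ∅ :=
        Finset.union_eq_empty.mp (by simpa [Tm.fv] using hc)
      cases p with
      | var x =>
        have hA : Γ₁ x = A := by
          have := congrFun (patVar hp) x
          simpa [Env.restrict, Env.single, Pat.fv] using this
        have hΓ₂ : Γ₂ = Env.empty := env_empty_of_closed_M hca ma
        obtain ⟨d', hd'⟩ := substT d₀ (castA hA.symm (castM hΓ₂ ma))
        simp only [measM_castA, measM_castM] at hd'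
        have hstep : Step (.esub body (.var x) a) (Tm.subst x a body) :=
          Step.root (Root.r2 body x a)
        have hc' : (Tm.subst x a body).fv = ∅ := by
          refine fv_subst_closed ?_ hca
          intro z hz
          by_contra hzx
          have : z ∈ body.fv \ (Pat.var x).fv := by
            simp [Pat.fv, hz]
            simpa using hzx
          rw [hcb] at this; simp at this
        have hm2 : measT d' < measT (TDeriv.esub d₀ hp ma) := by
          simp only [measT]; omega
        obtain ⟨t', hs', hc'', hshape', Γ'', d'', hm'', -⟩ :=
          ihn (measT d') (lt_of_lt_of_le hm2 hn) (tsize (Tm.subst x a body))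
            d' le_rfl le_rfl hc'
        exact ⟨t', (Relation.ReflTransGen.single hstep).trans hs', hc'', hshape', Γ'', d'',
          le_of_lt (lt_of_le_of_lt hm'' hm2), Or.inr (lt_of_le_of_lt hm'' hm2)⟩
      | pair p₁ p₂ =>
        obtain ⟨A₁, A₂, rfl, hp₁, hp₂, hdisj⟩ := patSplit hp
        have hΓ₂ : Γ₂ = Env.empty := env_empty_of_closed_M hca ma
        obtain ⟨dv, hdv⟩ := mderiv_single ma hΓ₂
        have hlt : measT dv < measT (TDeriv.esub d₀ hp ma) := by
          simp only [measT]; omega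
        obtain ⟨w, hsw, hcw, hshape, Γ', dw, hmw, hinv⟩ :=
          ihn (measT dv) (lt_of_lt_of_le hlt hn) (tsize a) dv le_rfl le_rfl hca
        rcases hshape with ⟨q, wb, rfl⟩ | ⟨w₁, w₂, rfl⟩
        · cases dw
        · cases dw with
          | pair m₁ m₂ =>
            rename_i Δa Δb
            obtain ⟨hcw₁, hcw₂⟩ : w₁.fv = ∅ ∧ w₂.fv = ∅ :=
              Finset.union_eq_empty.mp (by simpa [Tm.fv] using hcw)
            have hΔa : Δa = Env.empty := env_empty_of_closed_M hcw₁ m₁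
            have hp₂' : PatTy ((Γ₁.erase p₁).restrict p₂) p₂ A₂ := by
              rw [E_restrict_erase hdisj]; exact hp₂
            obtain ⟨outer, hmo⟩ : ∃ D : TDeriv (((Γ₁.erase p₁).erase p₂).add Δb)
                (Tm.esub (.esub body p₁ w₁) p₂ w₂) σ,
                measT D = measT d₀ + measM m₁ + measM m₂ + 2 :=
              ⟨TDeriv.esub (castT (by rw [hΔa, Env.add_empty]) (TDeriv.esub d₀ hp₁ m₁))
                hp₂' m₂, by simp only [measT, measT_castT]; omega⟩
            simp only [measT] at hmw hinv
            have hco : (Tm.esub (.esub body p₁ w₁) p₂ w₂).fv = ∅ := by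
              simp only [Tm.fv, hcw₁, hcw₂, Finset.union_empty]
              rw [Finset.eq_empty_iff_forall_notMem] at hcb ⊢
              intro z hz
              apply hcb z
              simp only [Finset.mem_sdiff, Pat.fv, Finset.mem_union] at hz ⊢
              exact ⟨hz.1.1, fun h => h.elim hz.1.2 hz.2⟩
            have hsteps : Steps (Tm.esub body (.pair p₁ p₂) a)
                (Tm.esub (.esub body p₁ w₁) p₂ w₂) :=
              (steps_subR _ _ hsw).tail
                (Step.root (Root.r3 body p₁ p₂ [] w₁ w₂))
            have hole : measT outer ≤ measT (TDeriv.esub d₀ hp ma) := by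
              simp only [measT]; omega
            rcases hinv with heq | hlt2
            · -- a = pair w₁ w₂ : use the size decrease
              have hsize : tsize (Tm.esub (.esub body p₁ w₁) p₂ w₂)
                  < tsize (Tm.esub body (.pair p₁ p₂) a) := by
                rw [← heq]; simp [tsize, psize]; omega
              obtain ⟨t', hs', hc'', hshape', Γ'', d'', hm'', hinv'⟩ :=
                ihk (tsize (Tm.esub (.esub body p₁ w₁) p₂ w₂))
                  (lt_of_lt_of_le hsize hk) outer (le_trans hole hn) le_rfl hco
              have hne : t' ≠ Tm.esub (.esub body p₁ w₁) p₂ w₂ := by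
                rcases hshape' with ⟨pp, uu, rfl⟩ | ⟨uu, vv, rfl⟩ <;> simp
              have hstrict : measT d'' < measT outer := hinv'.resolve_left hne
              exact ⟨t', hsteps.trans hs', hc'', hshape', Γ'', d'',
                le_trans (le_of_lt hstrict) hole,
                Or.inr (lt_of_lt_of_le hstrict hole)⟩
            · -- measT dw < measT dv : strict measure decrease
              have hstrict : measT outer < measT (TDeriv.esub d₀ hp ma) := by
                simp only [measT]; omega
              obtain ⟨t', hs', hc'', hshape', Γ'', d'', hm'', -⟩ :=
                ihn (measT outer) (lt_of_lt_of_le hstrict hn)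
                  (tsize (Tm.esub (.esub body p₁ w₁) p₂ w₂)) outer le_rfl le_rfl hco
              exact ⟨t', hsteps.trans hs', hc'', hshape', Γ'', d'',
                le_of_lt (lt_of_le_of_lt hm'' hstrict),
                Or.inr (lt_of_le_of_lt hm'' hstrict)⟩

end Main

/-- Canonicity of closed typable terms of datatype-shaped types:
a closed typable term of functional type reduces to an abstraction, and one of
product type reduces to a pair. -/
theorem closed_typable_shape {Γ : Env} {t : Tm} (hc : t.fv = ∅) :
    (∀ (A : List Ty) (σ : Ty), Nonempty (TDeriv Γ t (.arr A σ)) →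
      ∃ (p : Pat) (u : Tm), Steps t (.lam p u)) ∧
    (∀ A B : List Ty, Nonempty (TDeriv Γ t (.prod A B)) →
      ∃ u v : Tm, Steps t (.pair u v)) := by
  constructor
  · rintro A σ ⟨d⟩
    obtain ⟨t', hs, hc', hshape, Γ', d', -, -⟩ :=
      reach (measT d) (tsize t) d le_rfl le_rfl hc
    rcases hshape with ⟨p, u, rfl⟩ | ⟨u, v, rfl⟩
    · exact ⟨p, u, hs⟩
    · cases d'
  · rintro A B ⟨d⟩
    obtain ⟨t', hs, hc', hshape, Γ', d', -, -⟩ :=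
      reach (measT d) (tsize t) d le_rfl le_rfl hc
    rcases hshape with ⟨p, u, rfl⟩ | ⟨u, v, rfl⟩
    · cases d'
    · exact ⟨u, v, hs⟩
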